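/- Let X be a zero-dimensional set of reals. Then X satisfies the Menger property Ufin(O,O) if, and only if, for every continuous function Ψ : X → ℕ^ℕ the image Ψ[X] is not a dominating subset of ℕ^ℕ. -/

import Mathlib

open Filter

/-- `f ≤* g`: `f n ≤ g n` for all but finitely many `n`. -/
def EvLE (f g : ℕ → ℕ) : Prop := ∀ᶠ n in atTop, f n ≤ g n

/-- A subset of the Baire space is dominating if every function is
eventually dominated by a member of it. -/
def Dominating (Y : Set (ℕ → ℕ)) : Prop := ∀ g : ℕ → ℕ, ∃ f ∈ Y, EvLE g f

/-- A subset of the Baire space is bounded (w.r.t. `≤*`) if some single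
function eventually dominates all its members. -/
def BoundedStar (Y : Set (ℕ → ℕ)) : Prop := ∃ g : ℕ → ℕ, ∀ f ∈ Y, EvLE f g

/-- `maxfin Y`: pointwise maxima of nonempty finite subsets of `Y`. -/
def maxfin (Y : Set (ℕ → ℕ)) : Set (ℕ → ℕ) :=
  {g | ∃ F : Finset (ℕ → ℕ), F.Nonempty ∧ ↑F ⊆ Y ∧ g = fun n => F.sup (fun f => f n)}

/-- `Y` is `k`-dominating: for each `f` there are `g_1, …, g_k ∈ Y` whose
pointwise maximum eventually dominates `f`. -/
def KDominating (Y : Set (ℕ → ℕ)) (k : ℕ) : Prop :=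
  ∀ f : ℕ → ℕ, ∃ g : Fin k → (ℕ → ℕ), (∀ i, g i ∈ Y) ∧
    ∀ᶠ n in atTop, f n ≤ Finset.univ.sup (fun i => g i n)

/-- An open cover of a topological space. -/
def IsOpenCover {α : Type*} [TopologicalSpace α] (𝒰 : Set (Set α)) : Prop :=
  (∀ u ∈ 𝒰, IsOpen u) ∧ ⋃₀ 𝒰 = Set.univ

/-- An ω-cover: a cover such that every finite subset of the space is
contained in some member. -/
def IsOmegaCover {α : Type*} (𝒱 : Set (Set α)) : Prop :=
  ⋃₀ 𝒱 = Set.univ ∧ ∀ F : Set α, F.Finite → ∃ V ∈ 𝒱, F ⊆ V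

/-- A γ-cover: an infinite cover such that every point belongs to all but
finitely many members. -/
def IsGammaCover {α : Type*} (𝒱 : Set (Set α)) : Prop :=
  ⋃₀ 𝒱 = Set.univ ∧ 𝒱.Infinite ∧ ∀ x : α, {V ∈ 𝒱 | x ∉ V}.Finite

/-- A set of reals is zero-dimensional: its subspace topology has a base of
clopen sets. -/
def ZeroDimensionalSet (X : Set ℝ) : Prop :=
  ∃ B : Set (Set ↥X), TopologicalSpace.IsTopologicalBasis B ∧ ∀ b ∈ B, IsClopen b

/-- The Menger property `Ufin(O,O)`. -/
def MengerProp (α : Type*) [TopologicalSpace α] : Prop :=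
  ∀ 𝒰 : ℕ → Set (Set α), (∀ n, (𝒰 n).Countable ∧ IsOpenCover (𝒰 n)) →
    ∃ ℱ : ℕ → Set (Set α), (∀ n, (ℱ n).Finite ∧ ℱ n ⊆ 𝒰 n) ∧
      (⋃ n, ⋃₀ ℱ n) = Set.univ

/-- The Hurewicz property `Ufin(O,Γ)`. -/
def HurewiczProp (α : Type*) [TopologicalSpace α] : Prop :=
  ∀ 𝒰 : ℕ → Set (Set α), (∀ n, (𝒰 n).Countable ∧ IsOpenCover (𝒰 n)) →
    ∃ ℱ : ℕ → Set (Set α), (∀ n, (ℱ n).Finite ∧ ℱ n ⊆ 𝒰 n) ∧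
      ((∃ n, ⋃₀ ℱ n = Set.univ) ∨ IsGammaCover {s | ∃ n, s = ⋃₀ ℱ n})

/-- The property `Ufin(O,Ω)`. -/
def UfinOOmega (α : Type*) [TopologicalSpace α] : Prop :=
  ∀ 𝒰 : ℕ → Set (Set α), (∀ n, (𝒰 n).Countable ∧ IsOpenCover (𝒰 n)) →
    ∃ ℱ : ℕ → Set (Set α), (∀ n, (ℱ n).Finite ∧ ℱ n ⊆ 𝒰 n) ∧
      ((∃ n, ⋃₀ ℱ n = Set.univ) ∨ IsOmegaCover {s | ∃ n, s = ⋃₀ ℱ n})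


/-- Auxiliary: a uniform bound for a monotone property over a finite set. -/
lemma exists_uniform_bound {α : Type*} {S : Set α} (hS : S.Finite)
    (P : α → ℕ → Prop) (mono : ∀ a m m', m ≤ m' → P a m → P a m') :
    (∀ a ∈ S, ∃ m, P a m) → ∃ μ, ∀ a ∈ S, P a μ := by
  refine Set.Finite.induction_on (motive := fun s _ => (∀ a ∈ s, ∃ m, P a m) → ∃ μ, ∀ a ∈ s, P a μ)
    S hS (fun _ => ⟨0, by simp⟩) ?_
  intro a s ha hs ih h
  obtain ⟨μ₁, hμ₁⟩ := ih (fun b hb => h b (Set.mem_insert_of_mem _ hb))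
  obtain ⟨m, hm⟩ := h a (Set.mem_insert _ _)
  refine ⟨max m μ₁, ?_⟩
  rintro b (rfl | hb)
  · exact mono b m _ (le_max_left _ _) hm
  · exact mono b μ₁ _ (le_max_right _ _) (hμ₁ b hb)

/-- Auxiliary: a Menger space has no continuous dominating image in the Baire space. -/
lemma menger_not_dominating {α : Type*} [TopologicalSpace α] (hM : MengerProp α)
    (Ψ : α → (ℕ → ℕ)) (hΨ : Continuous Ψ) : ¬ Dominating (Set.range Ψ) := by
  intro hD
  -- For each k, apply Menger to the covers by sets `{x | Ψ x (k+j) < m}`.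
  have key : ∀ k : ℕ, ∃ μ : ℕ → ℕ, ∀ x : α, ∃ j : ℕ, Ψ x (k + j) < μ j := by
    intro k
    set V : ℕ → ℕ → Set α := fun j m => {x | Ψ x (k + j) < m} with hV
    have hVopen : ∀ j m, IsOpen (V j m) := by
      intro j m
      have hc : Continuous (fun x => Ψ x (k + j)) := (continuous_apply (k + j)).comp hΨ
      have : V j m = (fun x => Ψ x (k + j)) ⁻¹' {y | y < m} := rfl
      rw [this]
      exact (isOpen_discrete _).preimage hc
    obtain ⟨ℱ, hℱ, hcov⟩ := hM (fun j => Set.range (V j)) (by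
      intro j
      refine ⟨Set.countable_range _, fun u hu => ?_, ?_⟩
      · obtain ⟨m, rfl⟩ := hu; exact hVopen j m
      · apply Set.eq_univ_of_forall
        intro x
        exact ⟨V j (Ψ x (k + j) + 1), ⟨Ψ x (k + j) + 1, rfl⟩, Nat.lt_succ_self _⟩)
    have hbound : ∀ j, ∃ μ, ∀ u ∈ ℱ j, u ⊆ V j μ := by
      intro j
      refine exists_uniform_bound (hℱ j).1 (fun u m => u ⊆ V j m) ?_ ?_
      · intro u m m' hmm' hu x hx
        exact lt_of_lt_of_le (hu hx) hmm'
      · intro u hu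
        obtain ⟨m, rfl⟩ := (hℱ j).2 hu
        exact ⟨m, subset_rfl⟩
    choose μ hμ using hbound
    refine ⟨μ, fun x => ?_⟩
    have hx : x ∈ ⋃ j, ⋃₀ ℱ j := hcov ▸ Set.mem_univ x
    obtain ⟨j, u, hu, hxu⟩ := by simpa using hx
    exact ⟨j, hμ j u hu hxu⟩
  choose μ hμ using key
  -- diagonal bound
  set g : ℕ → ℕ := fun n => (Finset.range (n + 1)).sup (fun k => μ k (n - k)) + 1 with hg
  obtain ⟨f, ⟨x, rfl⟩, hf⟩ := hD g
  obtain ⟨N, hN⟩ := Filter.eventually_atTop.mp hf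
  obtain ⟨j, hj⟩ := hμ N x
  have h1 : g (N + j) ≤ Ψ x (N + j) := hN _ (Nat.le_add_right _ _)
  have h2 : μ N ((N + j) - N) ≤ (Finset.range (N + j + 1)).sup (fun k => μ k ((N + j) - k)) :=
    Finset.le_sup (f := fun k => μ k ((N + j) - k))
      (Finset.mem_range.mpr (Nat.lt_succ_of_le (Nat.le_add_right N j)))
  rw [Nat.add_sub_cancel_left] at h2
  rw [hg] at h1
  simp only at h1
  omega

/-- Hurewicz's characterization of the Menger property: a zero-dimensional
set of reals satisfies `Ufin(O,O)` iff no continuous image of it in the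
Baire space is dominating. -/
theorem menger_iff_no_dominating_continuous_image (X : Set ℝ)
    (hX : ZeroDimensionalSet X) :
    MengerProp ↥X ↔
      ∀ Ψ : ↥X → (ℕ → ℕ), Continuous Ψ → ¬ Dominating (Set.range Ψ) := by
  constructor
  · intro hM Ψ hΨ
    exact menger_not_dominating hM Ψ hΨ
  · intro hyp
    classical
    by_cases hE : IsEmpty ↥X
    · intro 𝒰 h𝒰
      refine ⟨fun _ => ∅, fun n => ⟨Set.finite_empty, Set.empty_subset _⟩, ?_⟩
      apply Set.eq_univ_of_forall
      intro x
      exact (hE.false x).elim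
    · rw [not_isEmpty_iff] at hE
      by_contra hnM
      rw [MengerProp] at hnM
      push_neg at hnM
      obtain ⟨𝒰, h𝒰, hfail⟩ := hnM
      obtain ⟨B, hBbasis, hBclopen⟩ := hX
      obtain ⟨B₀, hB₀c, -, hB₀basis⟩ := TopologicalSpace.exists_countable_basis ↥X
      -- Countable families of small basic sets refining each cover
      set T : ℕ → Set (Set ↥X) :=
        fun n => {s | s ∈ B₀ ∧ ∃ c ∈ B, ∃ U ∈ 𝒰 n, s ⊆ c ∧ c ⊆ U} with hT
      have hTc : ∀ n, (T n).Countable := fun n => hB₀c.mono (fun s hs => hs.1)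
      have hTcov : ∀ n (x : ↥X), ∃ s ∈ T n, x ∈ s := by
        intro n x
        have hx : x ∈ ⋃₀ 𝒰 n := (h𝒰 n).2.2 ▸ Set.mem_univ x
        obtain ⟨U, hU, hxU⟩ := hx
        obtain ⟨c, hc, hxc, hcU⟩ :=
          hBbasis.exists_subset_of_mem_open hxU ((h𝒰 n).2.1 U hU)
        obtain ⟨s, hs, hxs, hsc⟩ :=
          hB₀basis.exists_subset_of_mem_open hxc (hBclopen c hc).2
        exact ⟨s, ⟨hs, c, hc, U, hU, hsc, hcU⟩, hxs⟩
      have hTne : ∀ n, (T n).Nonempty := by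
        intro n
        obtain ⟨s, hs, -⟩ := hTcov n hE.some
        exact ⟨s, hs⟩
      have hTen : ∀ n, ∃ σ : ℕ → Set ↥X, T n = Set.range σ :=
        fun n => (hTc n).exists_eq_range (hTne n)
      choose σ hσ using hTen
      have hσmem : ∀ n k, σ n k ∈ T n := by
        intro n k
        rw [hσ n]
        exact ⟨k, rfl⟩
      have hchoice : ∀ n k, ∃ c, (c ∈ B ∧ σ n k ⊆ c) ∧ ∃ U ∈ 𝒰 n, c ⊆ U := by
        intro n k
        obtain ⟨-, c, hc, U, hU, hsc, hcU⟩ := hσmem n k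
        exact ⟨c, ⟨hc, hsc⟩, U, hU, hcU⟩
      choose c hc hU using hchoice
      choose U hUmem hcu using hU
      have hccov : ∀ n (x : ↥X), ∃ k, x ∈ c n k := by
        intro n x
        obtain ⟨s, hs, hxs⟩ := hTcov n x
        rw [hσ n] at hs
        obtain ⟨k, rfl⟩ := hs
        exact ⟨k, (hc n k).2 hxs⟩
      have hcclopen : ∀ n k, IsClopen (c n k) := fun n k => hBclopen _ (hc n k).1
      -- the continuous map
      set Ψ : ↥X → ℕ → ℕ := fun x n => Nat.find (hccov n x) with hΨdef
      have hΨspec : ∀ x n, x ∈ c n (Ψ x n) := fun x n => Nat.find_spec (hccov n x)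
      have hΨmin : ∀ x n k, k < Ψ x n → x ∉ c n k :=
        fun x n k hk => Nat.find_min (hccov n x) hk
      have hfiber : ∀ n m, {x | Ψ x n = m} = c n m \ ⋃ i ∈ Finset.range m, c n i := by
        intro n m
        ext x
        simp only [Set.mem_setOf_eq, Set.mem_diff, Set.mem_iUnion, Finset.mem_range,
          not_exists]
        constructor
        · rintro rfl
          exact ⟨hΨspec x n, fun i hi => fun hxi => hΨmin x n i hi hxi⟩
        · rintro ⟨hxm, hmin⟩
          have h1 : Ψ x n ≤ m := Nat.find_le hxm
          rcases lt_or_eq_of_le h1 with h | h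
          · exact absurd (hΨspec x n) (hmin _ h)
          · exact h
      have hΨcont : Continuous Ψ := by
        apply continuous_pi
        intro n
        rw [continuous_discrete_rng]
        intro m
        have : (fun x => Ψ x n) ⁻¹' {m} = {x | Ψ x n = m} := rfl
        rw [this, hfiber n m]
        refine ((hcclopen n m).2).sdiff ?_
        exact isClosed_biUnion_finset (fun i _ => (hcclopen n i).1)
      refine hyp Ψ hΨcont ?_
      intro g
      -- finite selections from the covers
      set ℱ : ℕ → Set (Set ↥X) := fun n => (fun k => U n k) '' {k | k ≤ g n} with hℱdef
      have hℱfin : ∀ n, (ℱ n).Finite :=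
        fun n => (Set.finite_Iic (g n)).image _
      have hℱsub : ∀ n, ℱ n ⊆ 𝒰 n := by
        rintro n u ⟨k, -, rfl⟩
        exact hUmem n k
      obtain ⟨x, hx⟩ := not_forall.mp
        (fun h => hfail ℱ (fun n => ⟨hℱfin n, hℱsub n⟩) (Set.eq_univ_of_forall h))
      have hx' : ∀ n k, k ≤ g n → x ∉ c n k := by
        intro n k hk hxc
        exact hx (Set.mem_iUnion.mpr ⟨n, Set.mem_sUnion.mpr
          ⟨U n k, ⟨k, hk, rfl⟩, hcu n k hxc⟩⟩)
      refine ⟨Ψ x, Set.mem_range_self x, Filter.Eventually.of_forall fun n => ?_⟩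
      by_contra hlt
      push_neg at hlt
      exact hx' n (Ψ x n) (Nat.le_of_lt_succ (Nat.lt_succ_of_lt hlt)) (hΨspec x n)
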